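/- If G admits at least one G-parking function, then G has a spanning tree rooted at 0 (i.e., a subgraph in which every vertex has a unique directed path to 0). -/

import Mathlib

open Finset

open scoped Classical

/-- A subtree of the digraph (with multiplicity function `E`) on vertices
`{0,...,n}`, rooted at `0`: every non-root vertex of the subtree has a unique
outgoing edge (its parent together with the index of a parallel edge), and
iterating parents reaches the root. -/
structure Subtree (n : ℕ) (E : Fin (n+1) → Fin (n+1) → ℕ) where
  par : Fin (n+1) → Option (Fin (n+1) × ℕ)
  root_par : par 0 = none
  edge_valid : ∀ v p k, par v = some (p, k) → k < E v p
  parent_mem : ∀ v p k, par v = some (p, k) → p = 0 ∨ (par p).isSome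
  reaches : ∀ v, (par v).isSome →
    Relation.ReflTransGen (fun a c => ∃ k, par a = some (c, k)) v 0

noncomputable def Subtree.verts {n : ℕ} {E : Fin (n+1) → Fin (n+1) → ℕ}
    (t : Subtree n E) : Finset (Fin (n+1)) :=
  Finset.univ.filter (fun v => v = 0 ∨ (t.par v).isSome)

def Subtree.IsSubtreeOf {n : ℕ} {E : Fin (n+1) → Fin (n+1) → ℕ}
    (t T : Subtree n E) : Prop :=
  ∀ v, (t.par v).isSome → t.par v = T.par v

def Subtree.IsSpanning {n : ℕ} {E : Fin (n+1) → Fin (n+1) → ℕ}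
    (T : Subtree n E) : Prop :=
  ∀ v, v ∈ T.verts

/-- `b` is a `G`-parking function: for every non-empty set `U` of non-root
vertices there is `j ∈ U` with more than `b j` edges from `j` to the
complement of `U`. (The value `b 0` at the root is irrelevant.) -/
def IsParking {n : ℕ} (E : Fin (n+1) → Fin (n+1) → ℕ) (b : Fin (n+1) → ℕ) : Prop :=
  ∀ U : Finset (Fin (n+1)), U.Nonempty → 0 ∉ U → ∃ j ∈ U, b j < ∑ i ∈ Uᶜ, E j i

/-- If `G` admits at least one `G`-parking function, then `G` has a spanning
tree rooted at `0`. -/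
lemma Subtree.extend {n : ℕ} {E : Fin (n+1) → Fin (n+1) → ℕ}
    (t : Subtree n E) (j p : Fin (n+1)) (hj : j ∉ t.verts) (hp : p ∈ t.verts)
    (hE : 0 < E j p) : ∃ t' : Subtree n E, t'.verts = insert j t.verts := by
  simp only [Subtree.verts, Finset.mem_filter, Finset.mem_univ, true_and,
    not_or] at hj hp
  obtain ⟨hj0, hjn⟩ := hj
  rw [Option.not_isSome_iff_eq_none] at hjn
  have hne : p ≠ j := by
    rintro rfl
    rcases hp with h | h
    · exact hj0 h
    · rw [hjn] at h; simp at h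
  refine ⟨⟨Function.update t.par j (some (p, 0)), ?_, ?_, ?_, ?_⟩, ?_⟩
  · rw [Function.update_of_ne (Ne.symm hj0), t.root_par]
  · intro v q k hv
    by_cases hvj : v = j
    · subst hvj
      rw [Function.update_self] at hv
      obtain ⟨rfl, rfl⟩ : q = p ∧ k = 0 := by simpa using hv.symm
      exact hE
    · rw [Function.update_of_ne hvj] at hv
      exact t.edge_valid v q k hv
  · intro v q k hv
    by_cases hvj : v = j
    · subst hvj
      rw [Function.update_self] at hv
      obtain ⟨rfl, rfl⟩ : q = p ∧ k = 0 := by simpa using hv.symm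
      rcases hp with h | h
      · exact Or.inl h
      · right; rwa [Function.update_of_ne hne]
    · rw [Function.update_of_ne hvj] at hv
      rcases t.parent_mem v q k hv with h | h
      · exact Or.inl h
      · right
        have hqj : q ≠ j := by rintro rfl; rw [hjn] at h; simp at h
        rwa [Function.update_of_ne hqj]
  · -- reaches
    have lift : ∀ a c : Fin (n+1),
        Relation.ReflTransGen (fun a c => ∃ k, t.par a = some (c, k)) a c →
        Relation.ReflTransGen
          (fun a c => ∃ k, Function.update t.par j (some (p, 0)) a = some (c, k)) a c := by
      intro a c hac
      refine Relation.ReflTransGen.mono (fun x y hxy => ?_) _ _ hac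
      obtain ⟨k, hk⟩ := hxy
      have hxj : x ≠ j := by rintro rfl; rw [hjn] at hk; simp at hk
      exact ⟨k, by rwa [Function.update_of_ne hxj]⟩
    intro v hv
    by_cases hvj : v = j
    · subst hvj
      refine Relation.ReflTransGen.head ⟨0, Function.update_self _ _ _⟩ ?_
      rcases hp with h | h
      · subst h; exact Relation.ReflTransGen.refl
      · exact lift _ _ (t.reaches p h)
    · rw [Function.update_of_ne hvj] at hv
      exact lift _ _ (t.reaches v hv)
  · ext v
    simp only [Subtree.verts, Finset.mem_filter, Finset.mem_univ, true_and,
      Finset.mem_insert]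
    by_cases hvj : v = j
    · subst hvj
      simp [Function.update_self]
    · rw [Function.update_of_ne hvj]
      tauto

theorem stmt_3 (n : ℕ) (E : Fin (n+1) → Fin (n+1) → ℕ)
    (h : ∃ b : Fin (n+1) → ℕ, IsParking E b) :
    ∃ T : Subtree n E, T.IsSpanning := by
  obtain ⟨b, hb⟩ := h
  have key : ∀ k : ℕ, ∀ t : Subtree n E, t.vertsᶜ.card ≤ k →
      ∃ T : Subtree n E, T.IsSpanning := by
    intro k
    induction k with
    | zero =>
      intro t ht
      refine ⟨t, fun v => ?_⟩
      have he : t.vertsᶜ = ∅ := Finset.card_eq_zero.mp (Nat.le_zero.mp ht)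
      by_contra hv
      exact Finset.notMem_empty v (by rwa [← he, Finset.mem_compl])
    | succ k ih =>
      intro t ht
      by_cases hfull : t.vertsᶜ = ∅
      · refine ⟨t, fun v => ?_⟩
        by_contra hv
        exact Finset.notMem_empty v (by rwa [← hfull, Finset.mem_compl])
      · have hne : t.vertsᶜ.Nonempty := Finset.nonempty_of_ne_empty hfull
        have h0 : (0 : Fin (n+1)) ∈ t.verts := by
          simp [Subtree.verts]
        have h0' : (0 : Fin (n+1)) ∉ t.vertsᶜ := by
          rwa [Finset.mem_compl, not_not]
        obtain ⟨j, hjU, hjb⟩ := hb t.vertsᶜ hne h0'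
        rw [compl_compl] at hjb
        have hsum : 0 < ∑ i ∈ t.verts, E j i := lt_of_le_of_lt (Nat.zero_le _) hjb
        obtain ⟨p, hp, hEp⟩ : ∃ p ∈ t.verts, 0 < E j p := by
          by_contra hcon
          push_neg at hcon
          have : ∑ i ∈ t.verts, E j i = 0 :=
            Finset.sum_eq_zero (fun i hi => Nat.le_zero.mp (hcon i hi))
          omega
        have hjv : j ∉ t.verts := Finset.mem_compl.mp hjU
        obtain ⟨t', ht'⟩ := t.extend j p hjv hp hEp
        refine ih t' ?_
        have hsub : t'.vertsᶜ ⊂ t.vertsᶜ := by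
          rw [ht']
          exact Finset.compl_ssubset_compl.mpr (Finset.ssubset_insert hjv)
        have := Finset.card_lt_card hsub
        omega
  have t₀ : Subtree n E :=
    ⟨fun _ => none, rfl, by simp, by simp, by simp⟩
  exact key t₀.vertsᶜ.card t₀ le_rfl
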